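/- For any prime p ≥ 3, the orders of elements of PSL(2, p) are exactly the divisors of p, (p−1)/2, and (p+1)/2, and these three numbers are pairwise coprime. -/

import Mathlib

open Matrix Polynomial

-- 2x2 Cayley-Hamilton
lemma ch2 {R : Type*} [CommRing R] (M : Matrix (Fin 2) (Fin 2) R) :
    M ^ 2 - M.trace • M + M.det • (1 : Matrix (Fin 2) (Fin 2) R) = 0 := by
  ext i j
  simp only [Matrix.sub_apply, Matrix.add_apply, Matrix.smul_apply, Matrix.zero_apply,
    pow_two, Matrix.mul_apply, Fin.sum_univ_two, Matrix.trace_fin_two, Matrix.det_fin_two,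
    Matrix.one_apply, smul_eq_mul]
  fin_cases i <;> fin_cases j <;> simp <;> ring

-- quadratic divides X^m - C e
lemma quad_dvd {K : Type*} [Field K] {t e l : K} (hl : l ≠ 0)
    (ht : l + l⁻¹ = t) (hne : l ≠ l⁻¹) (m : ℕ) (h1 : l ^ m = e) (he : e * e = 1) :
    (X ^ 2 - C t * X + 1 : K[X]) ∣ X ^ m - C e := by
  have h0 : l * l⁻¹ = 1 := mul_inv_cancel₀ hl
  have key : (X - C l) * (X - C l⁻¹) = (X ^ 2 - C t * X + 1 : K[X]) := by
    have h : (X - C l) * (X - C l⁻¹) = X ^ 2 - (C l + C l⁻¹) * X + C l * C l⁻¹ := by ring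
    rw [h, ← C_add, ← C_mul, ht, h0, C_1]
  have hr1 : IsRoot (X ^ m - C e : K[X]) l := by
    simp [IsRoot, h1]
  obtain ⟨g, hg⟩ := (dvd_iff_isRoot).mpr hr1
  have hr2 : IsRoot g l⁻¹ := by
    have : eval l⁻¹ (X ^ m - C e : K[X]) = 0 := by
      have hinv : l⁻¹ ^ m = e := by
        rw [inv_pow, h1, inv_eq_of_mul_eq_one_right he]
      simp [hinv]
    rw [hg] at this
    simp only [eval_mul, eval_sub, eval_X, eval_C] at this
    rcases mul_eq_zero.mp this with h | h
    · exact absurd (sub_eq_zero.mp h).symm hne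
    · exact h
  obtain ⟨g2, hg2⟩ := (dvd_iff_isRoot).mpr hr2
  rw [← key, hg, hg2]
  exact ⟨g2, by ring⟩

lemma pow_eq_smul_one {K : Type*} [Field K] (B : Matrix (Fin 2) (Fin 2) K)
    (hdet : B.det = 1) {l e : K} (hl : l ≠ 0) (ht : l + l⁻¹ = B.trace)
    (hne : l ≠ l⁻¹) (m : ℕ) (h1 : l ^ m = e) (he : e * e = 1) :
    B ^ m = e • (1 : Matrix (Fin 2) (Fin 2) K) := by
  have hCH : (aeval B) (X ^ 2 - C B.trace * X + 1 : K[X]) = 0 := by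
    have h := ch2 B
    rw [hdet, one_smul] at h
    simp only [map_add, map_sub, _root_.map_mul, _root_.map_one, aeval_X_pow, aeval_C, aeval_X]
    rwa [← Algebra.smul_def]
  obtain ⟨g, hg⟩ := quad_dvd hl ht hne m h1 he
  have h0 : (aeval B) (X ^ m - C e : K[X]) = 0 := by rw [hg, _root_.map_mul, hCH, zero_mul]
  simp only [map_sub, aeval_X_pow, aeval_C, Algebra.algebraMap_eq_smul_one] at h0
  rw [sub_eq_zero] at h0
  exact h0

open scoped MatrixGroups

lemma mk_pow_eq_one {p : ℕ} [Fact p.Prime] (A : SpecialLinearGroup (Fin 2) (ZMod p)) (m : ℕ)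
    {e : ZMod p} (he : e = 1 ∨ e = -1)
    (h : (A : Matrix (Fin 2) (Fin 2) (ZMod p)) ^ m = e • 1) :
    (QuotientGroup.mk A : ProjectiveSpecialLinearGroup (Fin 2) (ZMod p)) ^ m = 1 := by
  have h2 : (QuotientGroup.mk A : ProjectiveSpecialLinearGroup (Fin 2) (ZMod p)) ^ m
      = QuotientGroup.mk (A ^ m) := rfl
  rw [h2, QuotientGroup.eq_one_iff, Matrix.SpecialLinearGroup.mem_center_iff]
  refine ⟨e, ?_, ?_⟩
  · rcases he with rfl | rfl <;> simp
  · rw [Matrix.SpecialLinearGroup.coe_pow, h, scalar_apply, smul_one_eq_diagonal]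

lemma center_mem_cases {p : ℕ} [Fact p.Prime] (A : SpecialLinearGroup (Fin 2) (ZMod p))
    (h : A ∈ Subgroup.center (SpecialLinearGroup (Fin 2) (ZMod p))) :
    (A : Matrix (Fin 2) (Fin 2) (ZMod p)) = 1 ∨
      (A : Matrix (Fin 2) (Fin 2) (ZMod p)) = -1 := by
  rw [Matrix.SpecialLinearGroup.mem_center_iff] at h
  obtain ⟨r, hr, hA⟩ := h
  have h2 : r * r = 1 := by simpa [sq] using hr
  rcases mul_self_eq_one_iff.mp h2 with rfl | rfl
  · left; rw [← hA, scalar_apply]; simp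
  · right; rw [← hA, scalar_apply]
    rw [← smul_one_eq_diagonal]
    simp

lemma mk_pow_cases {p : ℕ} [Fact p.Prime] (A : SpecialLinearGroup (Fin 2) (ZMod p)) (m : ℕ)
    (h : (QuotientGroup.mk A : ProjectiveSpecialLinearGroup (Fin 2) (ZMod p)) ^ m = 1) :
    (A : Matrix (Fin 2) (Fin 2) (ZMod p)) ^ m = 1 ∨
      (A : Matrix (Fin 2) (Fin 2) (ZMod p)) ^ m = -1 := by
  have h2 : (QuotientGroup.mk (A ^ m) : ProjectiveSpecialLinearGroup (Fin 2) (ZMod p)) = 1 := h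
  rw [QuotientGroup.eq_one_iff] at h2
  simpa [SpecialLinearGroup.coe_pow] using center_mem_cases _ h2

lemma aeval_quad {R : Type*} [CommRing R] (B : Matrix (Fin 2) (Fin 2) R) (hdet : B.det = 1) :
    (aeval B) (X ^ 2 - C B.trace * X + 1 : R[X]) = 0 := by
  have h := ch2 B
  rw [hdet, one_smul] at h
  simp only [map_add, map_sub, _root_.map_mul, _root_.map_one, aeval_X_pow, aeval_C, aeval_X]
  rwa [← Algebra.smul_def]

lemma pull_back {p : ℕ} [Fact p.Prime] {K : Type*} [Field K] [Algebra (ZMod p) K]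
    (A : SpecialLinearGroup (Fin 2) (ZMod p)) {l : K} (hl0 : l ≠ 0)
    (hsum : l + l⁻¹ = algebraMap (ZMod p) K ((A : Matrix (Fin 2) (Fin 2) (ZMod p)).trace))
    (hne : l ≠ l⁻¹) (m : ℕ) (hm : l ^ m * l ^ m = 1) :
    (QuotientGroup.mk A : ProjectiveSpecialLinearGroup (Fin 2) (ZMod p)) ^ m = 1 := by
  set φ := algebraMap (ZMod p) K with hφdef
  have hφ : Function.Injective φ := φ.injective
  set M : Matrix (Fin 2) (Fin 2) (ZMod p) := (A : Matrix (Fin 2) (Fin 2) (ZMod p)) with hM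
  have hdet : (M.map φ).det = 1 := by
    have h := RingHom.map_det φ M
    rw [RingHom.mapMatrix_apply] at h
    rw [← h, hM, A.2, _root_.map_one]
  have htr : (M.map φ).trace = φ M.trace := by
    simp [Matrix.trace_fin_two, Matrix.map_apply, ← map_add]
  have hB : (M.map φ) ^ m = (l ^ m) • (1 : Matrix (Fin 2) (Fin 2) K) :=
    pow_eq_smul_one (M.map φ) hdet hl0 (by rw [htr, ← hsum]) hne m rfl hm
  obtain ⟨e₀, he₀, heq⟩ : ∃ e₀ : ZMod p, (e₀ = 1 ∨ e₀ = -1) ∧ φ e₀ = l ^ m := by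
    rcases mul_self_eq_one_iff.mp hm with h | h
    · exact ⟨1, Or.inl rfl, by rw [_root_.map_one, h]⟩
    · exact ⟨-1, Or.inr rfl, by rw [map_neg, _root_.map_one, h]⟩
  have hmap : (M ^ m).map φ = (e₀ • (1 : Matrix (Fin 2) (Fin 2) (ZMod p))).map φ := by
    have h1 : (M ^ m).map φ = (M.map φ) ^ m := by
      have := map_pow φ.mapMatrix M m
      simpa [RingHom.mapMatrix_apply] using this
    have h2 : (e₀ • (1 : Matrix (Fin 2) (Fin 2) (ZMod p))).map φ
        = (φ e₀) • (1 : Matrix (Fin 2) (Fin 2) K) := by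
      ext i j
      by_cases hij : i = j <;>
        simp [Matrix.map_apply, Matrix.one_apply, hij]
    rw [h1, hB, h2, heq]
  have hfin : M ^ m = e₀ • 1 := Matrix.map_injective hφ hmap
  exact mk_pow_eq_one A m he₀ hfin

lemma forward {p : ℕ} [Fact p.Prime] (hp : 3 ≤ p) (A : SpecialLinearGroup (Fin 2) (ZMod p)) :
    ∃ m : ℕ, (m = p ∨ m = (p - 1) / 2 ∨ m = (p + 1) / 2) ∧
      (QuotientGroup.mk A : ProjectiveSpecialLinearGroup (Fin 2) (ZMod p)) ^ m = 1 := by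
  have hprime : p.Prime := Fact.out
  have hodd : p % 2 = 1 := Nat.odd_iff.mp (hprime.odd_of_ne_two (by omega))
  set τ : ZMod p := (A : Matrix (Fin 2) (Fin 2) (ZMod p)).trace with hτ
  have hCH := aeval_quad (A : Matrix (Fin 2) (Fin 2) (ZMod p)) A.2
  by_cases h2 : τ = 2
  · -- (X-1)^2 divides X^p - 1
    refine ⟨p, Or.inl rfl, mk_pow_eq_one A p (Or.inl rfl) ?_⟩
    have hq : (X ^ 2 - C τ * X + 1 : (ZMod p)[X]) = (X - 1) ^ 2 := by
      rw [h2]; rw [map_ofNat]; ring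
    have hdvd : (X ^ 2 - C τ * X + 1 : (ZMod p)[X]) ∣ X ^ p - 1 := by
      have hc : (X - 1 : (ZMod p)[X]) ^ p = X ^ p - 1 := by
        rw [show ((X : (ZMod p)[X]) - 1) ^ p = X ^ p - 1 ^ p from sub_pow_char X 1, one_pow]
      rw [hq, ← hc]
      exact pow_dvd_pow (X - 1 : (ZMod p)[X]) (by omega : 2 ≤ p)
    obtain ⟨g, hg⟩ := hdvd
    have h0 : (aeval (A : Matrix (Fin 2) (Fin 2) (ZMod p))) (X ^ p - 1 : (ZMod p)[X]) = 0 := by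
      rw [hg, _root_.map_mul, hCH, zero_mul]
    simp only [map_sub, aeval_X_pow, _root_.map_one] at h0
    rw [sub_eq_zero] at h0
    rw [h0, one_smul]
  by_cases hm2 : τ = -2
  · refine ⟨p, Or.inl rfl, mk_pow_eq_one A p (Or.inr rfl) ?_⟩
    have hq : (X ^ 2 - C τ * X + 1 : (ZMod p)[X]) = (X + 1) ^ 2 := by
      rw [hm2, map_neg, map_ofNat]; ring
    have hdvd : (X ^ 2 - C τ * X + 1 : (ZMod p)[X]) ∣ X ^ p + 1 := by
      have hc : (X + 1 : (ZMod p)[X]) ^ p = X ^ p + 1 := by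
        rw [show ((X : (ZMod p)[X]) + 1) ^ p = X ^ p + 1 ^ p from
          add_pow_char (x := (X : (ZMod p)[X])) (y := 1) _, one_pow]
      rw [hq, ← hc]
      exact pow_dvd_pow (X + 1 : (ZMod p)[X]) (by omega : 2 ≤ p)
    obtain ⟨g, hg⟩ := hdvd
    have h0 : (aeval (A : Matrix (Fin 2) (Fin 2) (ZMod p))) (X ^ p + 1 : (ZMod p)[X]) = 0 := by
      rw [hg, _root_.map_mul, hCH, zero_mul]
    simp only [map_add, aeval_X_pow, _root_.map_one] at h0
    have h1 : (A : Matrix (Fin 2) (Fin 2) (ZMod p)) ^ p = -1 := by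
      rw [← neg_eq_of_add_eq_zero_left h0]
    rw [h1, neg_smul, one_smul]
  · -- generic case
    set K := AlgebraicClosure (ZMod p)
    set φ := algebraMap (ZMod p) K with hφdef
    have hφ : Function.Injective φ := φ.injective
    have hcharK : CharP K p := charP_of_injective_algebraMap hφ p
    obtain ⟨l, hl⟩ : ∃ l : K, (X ^ 2 - C (φ τ) * X + 1 : K[X]).IsRoot l := by
      apply IsAlgClosed.exists_root
      have hq : (X ^ 2 - C (φ τ) * X + 1 : K[X]) = C 1 * X ^ 2 + C (-φ τ) * X + C 1 := by
        rw [map_neg, _root_.map_one]; ring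
      rw [hq, Polynomial.degree_quadratic one_ne_zero]
      exact two_ne_zero
    have hroot : l ^ 2 - φ τ * l + 1 = 0 := by
      simpa [Polynomial.IsRoot] using hl
    have hl0 : l ≠ 0 := by
      rintro rfl
      simp at hroot
    have hsum : l + l⁻¹ = φ τ := by
      have h0 := mul_inv_cancel₀ hl0
      linear_combination l⁻¹ * hroot + (φ τ - l) * h0
    have hne : l ≠ l⁻¹ := by
      intro h
      have h1 : l * l = 1 := by
        have h2' := mul_inv_cancel₀ hl0
        rwa [← h] at h2'
      rcases mul_self_eq_one_iff.mp h1 with rfl | rfl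
      · apply h2
        apply hφ
        rw [← hsum, map_ofNat]
        norm_num
      · apply hm2
        apply hφ
        rw [← hsum, map_neg, map_ofNat]
        norm_num
    have hfrob : (l ^ p - l) * (l ^ p - l⁻¹) = 0 := by
      have hp1 : l ^ 2 = φ τ * l - 1 := by linear_combination hroot
      have hp3 : (φ τ * l - 1) ^ p = (φ τ) ^ p * l ^ p - 1 := by
        rw [show (φ τ * l - 1) ^ p = (φ τ * l) ^ p - 1 ^ p from sub_pow_char _ _,
          mul_pow, one_pow]
      have hp4 : (φ τ) ^ p = φ τ := by rw [← map_pow, ZMod.pow_card]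
      have hp5 : (l ^ p) ^ 2 - φ τ * l ^ p + 1 = 0 := by
        have hcomm : (l ^ p) ^ 2 = (l ^ 2) ^ p := by ring
        rw [hcomm, hp1, hp3, hp4]; ring
      have h0 : l * l⁻¹ = 1 := mul_inv_cancel₀ hl0
      linear_combination hp5 - l ^ p * hsum + h0
    rcases mul_eq_zero.mp hfrob with h | h
    · -- l^p = l
      have hll : l ^ p = l := sub_eq_zero.mp h
      have hcyc : l ^ (p - 1) = 1 := by
        have hc : l ^ (p - 1) * l = 1 * l := by
          rw [← pow_succ, Nat.sub_add_cancel (by omega : 1 ≤ p), hll, one_mul]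
        exact mul_right_cancel₀ hl0 hc
      refine ⟨(p - 1) / 2, Or.inr (Or.inl rfl), pull_back A hl0 hsum hne _ ?_⟩
      rw [← pow_add, show (p - 1) / 2 + (p - 1) / 2 = p - 1 by omega, hcyc]
    · -- l^p = l⁻¹
      have hll : l ^ p = l⁻¹ := sub_eq_zero.mp h
      have hcyc : l ^ (p + 1) = 1 := by
        rw [pow_succ, hll, inv_mul_cancel₀ hl0]
      refine ⟨(p + 1) / 2, Or.inr (Or.inr rfl), pull_back A hl0 hsum hne _ ?_⟩
      rw [← pow_add, show (p + 1) / 2 + (p + 1) / 2 = p + 1 by omega, hcyc]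



lemma unipotent_pow {p : ℕ} [Fact p.Prime] (n : ℕ) :
    (!![1, 1; 0, 1] : Matrix (Fin 2) (Fin 2) (ZMod p)) ^ n = !![1, (n : ZMod p); 0, 1] := by
  induction n with
  | zero => simp [Matrix.one_fin_two]
  | succ n ih =>
    rw [pow_succ, ih, Matrix.mul_fin_two]
    push_cast
    norm_num
    rw [add_comm]

lemma exists_order_p {p : ℕ} [Fact p.Prime] (hp : 3 ≤ p) :
    ∃ g : ProjectiveSpecialLinearGroup (Fin 2) (ZMod p), orderOf g = p := by
  have hprime : p.Prime := Fact.out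
  set A : SpecialLinearGroup (Fin 2) (ZMod p) :=
    ⟨!![1, 1; 0, 1], by simp [Matrix.det_fin_two_of]⟩ with hA
  refine ⟨QuotientGroup.mk A, ?_⟩
  have hpow : (QuotientGroup.mk A : ProjectiveSpecialLinearGroup (Fin 2) (ZMod p)) ^ p = 1 := by
    apply mk_pow_eq_one A p (Or.inl rfl)
    show (!![1, 1; 0, 1] : Matrix (Fin 2) (Fin 2) (ZMod p)) ^ p = (1 : ZMod p) • 1
    rw [unipotent_pow, ZMod.natCast_self, one_smul, Matrix.one_fin_two]
  have hdvd := orderOf_dvd_of_pow_eq_one hpow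
  rcases (Nat.Prime.eq_one_or_self_of_dvd hprime _ hdvd) with h1 | h1
  · exfalso
    have hg1 : (QuotientGroup.mk A : ProjectiveSpecialLinearGroup (Fin 2) (ZMod p)) = 1 :=
      orderOf_eq_one_iff.mp h1
    rw [QuotientGroup.eq_one_iff] at hg1
    rcases center_mem_cases A hg1 with h | h <;>
    · have := congrFun (congrFun h 0) 1
      simp [hA] at this
  · exact h1

lemma smul_one_fin_two {R : Type*} [CommRing R] (e : R) :
    e • (1 : Matrix (Fin 2) (Fin 2) R) = !![e, 0; 0, e] := by
  ext i j
  fin_cases i <;> fin_cases j <;> simp [Matrix.one_apply]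

lemma diag_pow {R : Type*} [CommRing R] (a d : R) (n : ℕ) :
    (!![a, 0; 0, d] : Matrix (Fin 2) (Fin 2) R) ^ n = !![a ^ n, 0; 0, d ^ n] := by
  induction n with
  | zero => simp [Matrix.one_fin_two]
  | succ n ih => rw [pow_succ, ih, Matrix.mul_fin_two]; ring_nf

lemma unit_sq_cases {p : ℕ} [Fact p.Prime] (v : (ZMod p)ˣ) (h : v * v = 1) :
    v = 1 ∨ v = -1 := by
  have hval : (v : ZMod p) * (v : ZMod p) = 1 := by
    rw [← Units.val_mul, h, Units.val_one]
  rcases mul_self_eq_one_iff.mp hval with h1 | h1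
  · left; exact Units.ext h1
  · right; exact Units.ext (by rw [h1, Units.val_neg, Units.val_one])

lemma exists_order_sub {p : ℕ} [Fact p.Prime] (hp : 3 ≤ p) :
    ∃ g : ProjectiveSpecialLinearGroup (Fin 2) (ZMod p), orderOf g = (p - 1) / 2 := by
  have hprime : p.Prime := Fact.out
  have hodd : p % 2 = 1 := Nat.odd_iff.mp (hprime.odd_of_ne_two (by omega))
  obtain ⟨u, hu⟩ := IsCyclic.exists_generator (α := (ZMod p)ˣ)
  have hord : orderOf u = p - 1 := by
    rw [orderOf_eq_card_of_forall_mem_zpowers hu, Nat.card_eq_fintype_card, ZMod.card_units p]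
  set m := (p - 1) / 2 with hm
  have hm2 : 2 * m = p - 1 := by omega
  set A : SpecialLinearGroup (Fin 2) (ZMod p) :=
    ⟨!![(u : ZMod p), 0; 0, ((u⁻¹ : (ZMod p)ˣ) : ZMod p)], by
      rw [Matrix.det_fin_two_of, zero_mul, sub_zero, Units.mul_inv]⟩ with hA
  refine ⟨QuotientGroup.mk A, ?_⟩
  have hApow : ∀ n : ℕ, (A : Matrix (Fin 2) (Fin 2) (ZMod p)) ^ n
      = !![((u ^ n : (ZMod p)ˣ) : ZMod p), 0; 0, ((u⁻¹ ^ n : (ZMod p)ˣ) : ZMod p)] := by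
    intro n
    rw [hA]
    show (!![(u : ZMod p), 0; 0, ((u⁻¹ : (ZMod p)ˣ) : ZMod p)]) ^ n = _
    rw [diag_pow]
    simp only [Units.val_pow_eq_pow_val]
  have hsq : (u ^ m) * (u ^ m) = 1 := by
    rw [← pow_add, show m + m = p - 1 by omega, ← hord, pow_orderOf_eq_one]
  have hAm : (A : Matrix (Fin 2) (Fin 2) (ZMod p)) ^ m
      = !![((u ^ m : (ZMod p)ˣ) : ZMod p), 0; 0, ((u ^ m : (ZMod p)ˣ) : ZMod p)] := by
    rw [hApow m, inv_pow, inv_eq_of_mul_eq_one_right hsq]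
  have hupper : (QuotientGroup.mk A : ProjectiveSpecialLinearGroup (Fin 2) (ZMod p)) ^ m = 1 := by
    rcases unit_sq_cases (u ^ m) hsq with h | h
    · apply mk_pow_eq_one A m (Or.inl rfl)
      rw [hAm, h, Units.val_one, one_smul, Matrix.one_fin_two]
    · apply mk_pow_eq_one A m (Or.inr rfl)
      rw [hAm, h, smul_one_fin_two, Units.val_neg, Units.val_one]
  have hdvd1 := orderOf_dvd_of_pow_eq_one hupper
  set d := orderOf (QuotientGroup.mk A : ProjectiveSpecialLinearGroup (Fin 2) (ZMod p)) with hd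
  have hdvd2 : m ∣ d := by
    have hcases := mk_pow_cases A d (pow_orderOf_eq_one _)
    have hval : ((u ^ d : (ZMod p)ˣ) : ZMod p) = 1 ∨ ((u ^ d : (ZMod p)ˣ) : ZMod p) = -1 := by
      rcases hcases with h | h <;> rw [hApow d] at h <;>
        [left; right] <;>
      · have := congrFun (congrFun h 0) 0
        simpa [Matrix.one_fin_two] using this
    have hsq2 : (u ^ d) * (u ^ d) = 1 := by
      apply Units.ext
      rw [Units.val_mul, Units.val_one]
      rcases hval with h | h <;> rw [h] <;> ring
    have hdd : p - 1 ∣ 2 * d := by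
      rw [← hord]
      apply orderOf_dvd_of_pow_eq_one
      rw [two_mul, pow_add, hsq2]
    rw [← hm2] at hdd
    exact (mul_dvd_mul_iff_left (two_ne_zero)).mp hdd
  exact Nat.dvd_antisymm hdvd1 hdvd2

lemma frob_fixed_mem_range {p : ℕ} [Fact p.Prime] {K : Type*} [Field K] [Algebra (ZMod p) K]
    (t : K) (ht : t ^ p = t) : ∃ t₀ : ZMod p, algebraMap (ZMod p) K t₀ = t := by
  classical
  have hp2 : 2 ≤ p := (Fact.out : p.Prime).two_le
  by_contra hc
  push_neg at hc
  set φ := algebraMap (ZMod p) K with hφdef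
  have hφ : Function.Injective φ := φ.injective
  set f : K[X] := X ^ p - X with hf
  have hf0 : f ≠ 0 := by
    intro h
    have h2 := congrArg (fun q => Polynomial.coeff q p) h
    simp [hf, Polynomial.coeff_X_pow, Polynomial.coeff_X, (show ¬ (1 = p) by omega)] at h2
  set S : Finset K := insert t (Finset.univ.image fun a : ZMod p => φ a) with hS
  have hsub : S ⊆ f.roots.toFinset := by
    intro x hx
    rw [Multiset.mem_toFinset, Polynomial.mem_roots hf0]
    rcases Finset.mem_insert.mp hx with rfl | hx
    · simp [hf, Polynomial.IsRoot, ht]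
    · obtain ⟨a, _, rfl⟩ := Finset.mem_image.mp hx
      simp only [hf, Polynomial.IsRoot, Polynomial.eval_sub, Polynomial.eval_pow,
        Polynomial.eval_X]
      rw [← map_pow, ZMod.pow_card, sub_self]
  have hScard : S.card = p + 1 := by
    rw [hS, Finset.card_insert_of_notMem, Finset.card_image_of_injective _ hφ,
      Finset.card_univ, ZMod.card]
    intro hmem
    obtain ⟨a, _, ha⟩ := Finset.mem_image.mp hmem
    exact hc a ha
  have hcard2 : f.roots.toFinset.card ≤ p := by
    calc f.roots.toFinset.card ≤ Multiset.card f.roots := f.roots.toFinset_card_le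
      _ ≤ f.natDegree := Polynomial.card_roots' f
      _ ≤ p := by
        refine le_trans (Polynomial.natDegree_sub_le _ _) ?_
        simp [Polynomial.natDegree_X_pow, Polynomial.natDegree_X]
        omega
  have := Finset.card_le_card hsub
  omega

lemma mulVec_pow_eig {K : Type*} [Field K] (B : Matrix (Fin 2) (Fin 2) K) {l : K} {v : Fin 2 → K}
    (h : B.mulVec v = l • v) (n : ℕ) : (B ^ n).mulVec v = l ^ n • v := by
  induction n with
  | zero => simp [Matrix.one_mulVec]
  | succ n ih =>
    rw [pow_succ, ← Matrix.mulVec_mulVec, h, Matrix.mulVec_smul, ih, smul_smul, pow_succ]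
    ring_nf

lemma exists_order_add {p : ℕ} [Fact p.Prime] (hp : 3 ≤ p) :
    ∃ g : ProjectiveSpecialLinearGroup (Fin 2) (ZMod p), orderOf g = (p + 1) / 2 := by
  have hprime : p.Prime := Fact.out
  have hodd : p % 2 = 1 := Nat.odd_iff.mp (hprime.odd_of_ne_two (by omega))
  classical
  set K := GaloisField p 2 with hK
  letI : Fintype K := Fintype.ofFinite K
  set φ := algebraMap (ZMod p) K with hφdef
  have hcard : Fintype.card K = p ^ 2 := by
    rw [← Nat.card_eq_fintype_card, GaloisField.card p 2 two_ne_zero]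
  obtain ⟨z, hz⟩ := IsCyclic.exists_generator (α := Kˣ)
  have hordz : orderOf z = p ^ 2 - 1 := by
    rw [orderOf_eq_card_of_forall_mem_zpowers hz, Nat.card_eq_fintype_card,
      Fintype.card_units, hcard]
  set ζ : Kˣ := z ^ (p - 1) with hζ
  have hpsq : (p - 1) * (p + 1) = p ^ 2 - 1 := by
    obtain ⟨a, rfl⟩ : ∃ a, p = a + 1 := ⟨p - 1, by omega⟩
    have h1 : (a + 1) ^ 2 = a * a + 2 * a + 1 := by ring
    have h2 : a * (a + 1 + 1) = a * a + 2 * a := by ring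
    simpa using by omega
  have hordζ : orderOf ζ = p + 1 := by
    rw [hζ, orderOf_pow, hordz]
    have hdvd : (p - 1) ∣ (p ^ 2 - 1) := ⟨p + 1, hpsq.symm⟩
    rw [Nat.gcd_eq_right hdvd, ← hpsq, Nat.mul_div_cancel_left _ (by omega : 0 < p - 1)]
  set l : K := (ζ : K) with hl
  have hl0 : l ≠ 0 := Units.ne_zero ζ
  have hl1 : l ^ (p + 1) = 1 := by
    rw [hl, ← Units.val_pow_eq_pow_val, ← hordζ, pow_orderOf_eq_one, Units.val_one]
  have hlsq : l * l ≠ 1 := by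
    intro h
    have hζ2 : ζ ^ 2 = 1 := Units.ext (by
      rw [Units.val_pow_eq_pow_val, Units.val_one, pow_two]; exact h)
    have hd := orderOf_dvd_of_pow_eq_one hζ2
    rw [hordζ] at hd
    have := Nat.le_of_dvd (by norm_num) hd
    omega
  have hne : l ≠ l⁻¹ := by
    intro h
    apply hlsq
    nth_rewrite 2 [h]
    exact mul_inv_cancel₀ hl0
  have hlp : l ^ p = l⁻¹ := by
    apply eq_inv_of_mul_eq_one_left
    rw [← pow_succ]
    exact hl1
  set t : K := l + l⁻¹ with htdef
  have htp : t ^ p = t := by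
    have hCharK : CharP K p := inferInstance
    have hadd : (l + l⁻¹) ^ p = l ^ p + (l⁻¹) ^ p := add_pow_char _ _ _
    rw [htdef, hadd, hlp, inv_pow, hlp, inv_inv, add_comm]
  obtain ⟨t₀, ht₀⟩ := frob_fixed_mem_range t htp
  set A : SpecialLinearGroup (Fin 2) (ZMod p) :=
    ⟨!![t₀, -1; 1, 0], by rw [Matrix.det_fin_two_of]; ring⟩ with hA
  refine ⟨QuotientGroup.mk A, ?_⟩
  have htr : (A : Matrix (Fin 2) (Fin 2) (ZMod p)).trace = t₀ := by
    rw [hA]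
    show Matrix.trace !![t₀, -1; 1, 0] = t₀
    rw [Matrix.trace_fin_two_of, add_zero]
  have hsum : l + l⁻¹ = φ ((A : Matrix (Fin 2) (Fin 2) (ZMod p)).trace) := by
    rw [htr, ht₀]
  set m := (p + 1) / 2 with hm
  have hm2 : 2 * m = p + 1 := by omega
  have hupper : (QuotientGroup.mk A : ProjectiveSpecialLinearGroup (Fin 2) (ZMod p)) ^ m = 1 := by
    apply pull_back A hl0 hsum hne m
    rw [← pow_add, show m + m = p + 1 by omega, hl1]
  have hdvd1 := orderOf_dvd_of_pow_eq_one hupper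
  set d := orderOf (QuotientGroup.mk A : ProjectiveSpecialLinearGroup (Fin 2) (ZMod p)) with hd
  have hdvd2 : m ∣ d := by
    have hcases := mk_pow_cases A d (pow_orderOf_eq_one _)
    set B : Matrix (Fin 2) (Fin 2) K := ((A : Matrix (Fin 2) (Fin 2) (ZMod p)).map φ) with hB
    have hBv : B.mulVec ![l, 1] = l • ![l, 1] := by
      have hll : t * l = l * l + 1 := by
        rw [htdef, add_mul, inv_mul_cancel₀ hl0]
      have ht₀' : φ t₀ = t := ht₀
      funext i
      fin_cases i <;>
        simp [hB, hA, Matrix.mulVec, dotProduct, Matrix.map_apply, Fin.sum_univ_two, ht₀] <;>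
        linear_combination hll + l * ht₀'
    have heig := mulVec_pow_eig B hBv d
    have hpow : B ^ d = ((A : Matrix (Fin 2) (Fin 2) (ZMod p)) ^ d).map φ := by
      have := map_pow φ.mapMatrix (A : Matrix (Fin 2) (Fin 2) (ZMod p)) d
      simpa [RingHom.mapMatrix_apply, hB] using this.symm
    have hld : l ^ d = 1 ∨ l ^ d = -1 := by
      have hone : ((1 : Matrix (Fin 2) (Fin 2) (ZMod p)).map φ) = 1 :=
        Matrix.map_one φ (map_zero φ) (map_one φ)
      rcases hcases with h | h
      · left
        rw [hpow, h, hone, Matrix.one_mulVec] at heig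
        have h2 := congrFun heig 1
        simpa using h2.symm
      · right
        rw [hpow, h] at heig
        have hnegone : ((-1 : Matrix (Fin 2) (Fin 2) (ZMod p)).map φ) = -1 := by
          have h3 := _root_.map_neg φ.mapMatrix (1 : Matrix (Fin 2) (Fin 2) (ZMod p))
          rw [RingHom.mapMatrix_apply, RingHom.mapMatrix_apply] at h3
          rw [h3, hone]
        rw [hnegone, Matrix.neg_mulVec, Matrix.one_mulVec] at heig
        have h2 := congrFun heig 1
        simpa using h2.symm
    have hζd : ζ ^ (2 * d) = 1 := by
      apply Units.ext
      rw [Units.val_pow_eq_pow_val, Units.val_one, two_mul, pow_add, ← hl]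
      rcases hld with h | h <;> rw [h] <;> ring
    have hdd : (p + 1) ∣ 2 * d := by rw [← hordζ]; exact orderOf_dvd_of_pow_eq_one hζd
    rw [← hm2] at hdd
    exact (mul_dvd_mul_iff_left (two_ne_zero)).mp hdd
  exact Nat.dvd_antisymm hdvd1 hdvd2

theorem orders_in_PSL2p (p : ℕ) [Fact p.Prime] (hp : 3 ≤ p) :
    (Nat.Coprime p ((p - 1) / 2) ∧ Nat.Coprime p ((p + 1) / 2) ∧
      Nat.Coprime ((p - 1) / 2) ((p + 1) / 2)) ∧
    (∀ n : ℕ,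
      (∃ g : Matrix.ProjectiveSpecialLinearGroup (Fin 2) (ZMod p), orderOf g = n) ↔
      (n ∣ p ∨ n ∣ (p - 1) / 2 ∨ n ∣ (p + 1) / 2)) := by
  have hprime : p.Prime := Fact.out
  have hodd : p % 2 = 1 := Nat.odd_iff.mp (hprime.odd_of_ne_two (by omega))
  constructor
  · refine ⟨?_, ?_, ?_⟩
    · rw [Nat.Prime.coprime_iff_not_dvd hprime]
      intro h
      have := Nat.le_of_dvd (by omega) h
      omega
    · rw [Nat.Prime.coprime_iff_not_dvd hprime]
      intro h
      have := Nat.le_of_dvd (by omega) h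
      omega
    · have he : (p + 1) / 2 = (p - 1) / 2 + 1 := by omega
      rw [he]
      simp
  · intro n
    constructor
    · rintro ⟨g, rfl⟩
      obtain ⟨A, rfl⟩ := QuotientGroup.mk_surjective g
      obtain ⟨m, hm, hpow⟩ := forward hp A
      have hd := orderOf_dvd_of_pow_eq_one hpow
      rcases hm with rfl | rfl | rfl
      exacts [Or.inl hd, Or.inr (Or.inl hd), Or.inr (Or.inr hd)]
    · rintro (h | h | h)
      · obtain ⟨g, hg⟩ := exists_order_p (p := p) hp
        exact ⟨g ^ (orderOf g / n),
          orderOf_pow_orderOf_div (by rw [hg]; omega) (by rw [hg]; exact h)⟩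
      · obtain ⟨g, hg⟩ := exists_order_sub (p := p) hp
        exact ⟨g ^ (orderOf g / n),
          orderOf_pow_orderOf_div (by rw [hg]; omega) (by rw [hg]; exact h)⟩
      · obtain ⟨g, hg⟩ := exists_order_add (p := p) hp
        exact ⟨g ^ (orderOf g / n),
          orderOf_pow_orderOf_div (by rw [hg]; omega) (by rw [hg]; exact h)⟩
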